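/- Let M, η_B, η_E be positive real numbers and define f : ℝ → ℝ by f(s) = log(1 + η_B·(2s−M)²) − log(1 + η_E·(2s−M)²/(4s(M−s))). Then for every s with M/2 < s < M, f is differentiable at s and f'(s) = 0 if and only if 16·η_B·s²·(M−s)² − η_B·η_E·(2s−M)⁴ − M²·η_E = 0. -/

import Mathlib

open Real

/-- Critical-point characterization in the proof of Theorem 1: the worst-case
secrecy-rate objective has vanishing derivative on `(M/2, M)` exactly when
`16η_B s²(M−s)² − η_B η_E (2s−M)⁴ − M² η_E = 0`. -/
theorem stmt_14 (M ηB ηE : ℝ) (hM : 0 < M) (hB : 0 < ηB) (hE : 0 < ηE) :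
    let f : ℝ → ℝ := fun s =>
      Real.log (1 + ηB * (2 * s - M) ^ 2) -
        Real.log (1 + ηE * (2 * s - M) ^ 2 / (4 * s * (M - s)))
    ∀ s : ℝ, M / 2 < s → s < M →
      DifferentiableAt ℝ f s ∧
        (deriv f s = 0 ↔
          16 * ηB * s ^ 2 * (M - s) ^ 2 - ηB * ηE * (2 * s - M) ^ 4
            - M ^ 2 * ηE = 0) := by
  intro f s hs1 hs2
  have hfeq : f = fun s =>
      Real.log (1 + ηB * (2 * s - M) ^ 2) -
        Real.log (1 + ηE * (2 * s - M) ^ 2 / (4 * s * (M - s))) := rfl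
  have hs0 : 0 < s := by linarith
  have hms : 0 < M - s := by linarith
  have hd : 0 < 2 * s - M := by linarith
  have hq : 0 < 4 * s * (M - s) := by positivity
  have hu : 0 < 1 + ηB * (2 * s - M) ^ 2 := by positivity
  have hv : 0 < 1 + ηE * (2 * s - M) ^ 2 / (4 * s * (M - s)) := by positivity
  have h1 : HasDerivAt (fun x : ℝ => 2 * x - M) 2 s := by
    simpa using ((hasDerivAt_id s).const_mul 2).sub_const M
  have h2 : HasDerivAt (fun x : ℝ => (2 * x - M) ^ 2) (2 * (2 * s - M) * 2) s := by
    simpa using h1.fun_pow 2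
  have hU : HasDerivAt (fun x : ℝ => 1 + ηB * (2 * x - M) ^ 2)
      (ηB * (2 * (2 * s - M) * 2)) s := (h2.const_mul ηB).const_add 1
  have hN : HasDerivAt (fun x : ℝ => ηE * (2 * x - M) ^ 2)
      (ηE * (2 * (2 * s - M) * 2)) s := h2.const_mul ηE
  have hQ : HasDerivAt (fun x : ℝ => 4 * x * (M - x)) (4 * (M - s) - 4 * s) s := by
    have := ((hasDerivAt_id s).const_mul 4).fun_mul ((hasDerivAt_const s M).fun_sub (hasDerivAt_id s))
    simp only [id_eq] at this
    exact this.congr_deriv (by ring)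
  have hV : HasDerivAt (fun x : ℝ => 1 + ηE * (2 * x - M) ^ 2 / (4 * x * (M - x)))
      ((ηE * (2 * (2 * s - M) * 2) * (4 * s * (M - s))
        - ηE * (2 * s - M) ^ 2 * (4 * (M - s) - 4 * s)) / (4 * s * (M - s)) ^ 2) s :=
    (hN.div hQ hq.ne').const_add 1
  have hF : HasDerivAt f
      (ηB * (2 * (2 * s - M) * 2) / (1 + ηB * (2 * s - M) ^ 2)
        - ((ηE * (2 * (2 * s - M) * 2) * (4 * s * (M - s))
          - ηE * (2 * s - M) ^ 2 * (4 * (M - s) - 4 * s)) / (4 * s * (M - s)) ^ 2)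
          / (1 + ηE * (2 * s - M) ^ 2 / (4 * s * (M - s)))) s := by
    rw [hfeq]
    exact (hU.log hu.ne').sub (hV.log hv.ne')
  refine ⟨hF.differentiableAt, ?_⟩
  rw [hF.deriv]
  have key : ηB * (2 * (2 * s - M) * 2) / (1 + ηB * (2 * s - M) ^ 2)
        - ((ηE * (2 * (2 * s - M) * 2) * (4 * s * (M - s))
          - ηE * (2 * s - M) ^ 2 * (4 * (M - s) - 4 * s)) / (4 * s * (M - s)) ^ 2)
          / (1 + ηE * (2 * s - M) ^ 2 / (4 * s * (M - s)))
      = 4 * (2 * s - M) *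
          (16 * ηB * s ^ 2 * (M - s) ^ 2 - ηB * ηE * (2 * s - M) ^ 4 - M ^ 2 * ηE) /
        ((1 + ηB * (2 * s - M) ^ 2) *
          ((4 * s * (M - s)) * (4 * s * (M - s) + ηE * (2 * s - M) ^ 2))) := by
    have hvn : 0 < 4 * s * (M - s) + ηE * (2 * s - M) ^ 2 := by positivity
    field_simp
    ring
  rw [key]
  have hden : 0 < (1 + ηB * (2 * s - M) ^ 2) *
      ((4 * s * (M - s)) * (4 * s * (M - s) + ηE * (2 * s - M) ^ 2)) := by positivity
  have h4d : (4 * (2 * s - M)) ≠ 0 := by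
    have : 0 < 4 * (2 * s - M) := by linarith
    exact this.ne'
  rw [div_eq_zero_iff]
  simp [hden.ne', mul_eq_zero, h4d]
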